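/- Let R > 0, let K ⊆ ℝ^n be an R-ball convex body, and let δ > 0. Then for every point x in the boundary ∂K_δ^R of the R-ball floating body K_δ^R there exists a point y ∈ ℝ^n such that ‖x − y‖ = R (i.e. x lies on the sphere of radius R centered at y) and vol_n(K \ closedBall(y,R)) = δ; that is, through every boundary point of K_δ^R there passes at least one closed ball of radius R that cuts off from K a set of volume exactly δ. -/

import Mathlib

open MeasureTheory

/-- The `R`-ball floating body `K_δ^R` of `K ⊆ ℝⁿ`: the intersection of all closed balls of
radius `R` that cut off from `K` a set of volume at most `δ`. -/
def ballFloatingBody (n : ℕ) (R δ : ℝ) (K : Set (EuclideanSpace ℝ (Fin n))) :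
    Set (EuclideanSpace ℝ (Fin n)) :=
  ⋂ y ∈ {y : EuclideanSpace ℝ (Fin n) |
      volume (K \ Metric.closedBall y R) ≤ ENNReal.ofReal δ}, Metric.closedBall y R

/-- `K` is an `R`-ball convex body: compact, with nonempty interior, and equal to the
intersection of all closed balls of radius `R` containing it. -/
def IsBallConvexBody (n : ℕ) (R : ℝ) (K : Set (EuclideanSpace ℝ (Fin n))) : Prop :=
  IsCompact K ∧ (interior K).Nonempty ∧
    K = ⋂ y ∈ {y : EuclideanSpace ℝ (Fin n) | K ⊆ Metric.closedBall y R}, Metric.closedBall y R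

open Metric Set Filter in
/-- Continuity from above: if cutting with radius `R` cuts off less than `δ`, then some slightly
smaller ball also cuts off at most `δ`. -/
private lemma aux_shrink (n : ℕ) (R : ℝ) (hR : 0 < R)
    (K : Set (EuclideanSpace ℝ (Fin n))) (hKc : IsCompact K)
    (δ : ℝ) (y : EuclideanSpace ℝ (Fin n))
    (hlt : volume (K \ closedBall y R) < ENNReal.ofReal δ) :
    ∃ s : ℝ, 0 < s ∧ volume (K \ closedBall y (R - s)) ≤ ENNReal.ofReal δ := by
  have hsph : volume (sphere y R) = 0 :=
    Measure.addHaar_sphere_of_ne_zero volume y hR.ne'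
  have hball : volume (K \ ball y R) < ENNReal.ofReal δ := by
    have hsub : K \ ball y R ⊆ (K \ closedBall y R) ∪ sphere y R := by
      intro z hz
      rcases le_or_gt (dist z y) R with h | h
      · exact Or.inr (le_antisymm h (not_lt.1 fun hc => hz.2 hc))
      · exact Or.inl ⟨hz.1, fun hc => absurd hc (not_le.2 h)⟩
    calc volume (K \ ball y R) ≤ volume (K \ closedBall y R) + volume (sphere y R) :=
          le_trans (measure_mono hsub) (measure_union_le _ _)
      _ = volume (K \ closedBall y R) := by rw [hsph, add_zero]
      _ < ENNReal.ofReal δ := hlt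
  set s : ℕ → Set (EuclideanSpace ℝ (Fin n)) := fun k => K \ closedBall y (R - 1/(k+1)) with hs
  have hanti : Antitone s := by
    intro k l hkl
    apply diff_subset_diff_right
    apply closedBall_subset_closedBall
    have : (1:ℝ)/(l+1) ≤ 1/(k+1) := by
      apply one_div_le_one_div_of_le (by positivity)
      exact_mod_cast Nat.succ_le_succ hkl
    linarith
  have hInter : ⋂ k, s k = K \ ball y R := by
    ext z
    simp only [hs, mem_iInter, mem_diff, mem_closedBall, mem_ball, not_le, not_lt]
    constructor
    · intro h
      refine ⟨(h 0).1, ?_⟩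
      by_contra hc
      push_neg at hc
      obtain ⟨k, hk⟩ := exists_nat_one_div_lt (show 0 < R - dist z y by linarith)
      have := (h k).2
      linarith
    · intro h k
      have h1 : (0:ℝ) < 1/(k+1) := by positivity
      exact ⟨h.1, by linarith [h.2]⟩
  have heq : volume (⋂ k, s k) = ⨅ k, volume (s k) := by
    refine Directed.measure_iInter (fun k => ?_) hanti.directed_ge ⟨0, ?_⟩
    · exact (hKc.isClosed.measurableSet.diff measurableSet_closedBall).nullMeasurableSet
    · exact (lt_of_le_of_lt (measure_mono diff_subset) hKc.measure_lt_top).ne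
  rw [hInter] at heq
  have : ⨅ k, volume (s k) < ENNReal.ofReal δ := heq ▸ hball
  obtain ⟨k, hk⟩ := iInf_lt_iff.1 this
  exact ⟨1/(k+1), by positivity, hk.le⟩

open Metric Set Filter in
/-- Continuity from below: if arbitrarily close centers cut off volume at most `c`,
then so does the limit center. -/
private lemma aux_approx (n : ℕ) (R : ℝ)
    (K : Set (EuclideanSpace ℝ (Fin n))) (c : ENNReal) (y : EuclideanSpace ℝ (Fin n))
    (h : ∀ ε : ℝ, 0 < ε → ∃ y', dist y' y ≤ ε ∧ volume (K \ closedBall y' R) ≤ c) :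
    volume (K \ closedBall y R) ≤ c := by
  set s : ℕ → Set (EuclideanSpace ℝ (Fin n)) := fun k => K \ closedBall y (R + 1/(k+1)) with hs
  have hmono : Monotone s := by
    intro k l hkl
    apply diff_subset_diff_right
    apply closedBall_subset_closedBall
    have : (1:ℝ)/(l+1) ≤ 1/(k+1) := by
      apply one_div_le_one_div_of_le (by positivity)
      exact_mod_cast Nat.succ_le_succ hkl
    linarith
  have hUnion : ⋃ k, s k = K \ closedBall y R := by
    ext z
    simp only [hs, mem_iUnion, mem_diff, mem_closedBall, not_le]
    constructor
    · rintro ⟨k, hzK, hk⟩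
      have h1 : (0:ℝ) < 1/(k+1) := by positivity
      exact ⟨hzK, by linarith⟩
    · rintro ⟨hzK, hz⟩
      obtain ⟨k, hk⟩ := exists_nat_one_div_lt (show 0 < dist z y - R by linarith)
      exact ⟨k, hzK, by linarith⟩
  rw [← hUnion, hmono.measure_iUnion]
  refine iSup_le fun k => ?_
  obtain ⟨y', hy'd, hy'v⟩ := h (1/(k+1)) (by positivity)
  refine le_trans (measure_mono ?_) hy'v
  apply diff_subset_diff_right
  intro z hz
  simp only [mem_closedBall] at *
  calc dist z y ≤ dist z y' + dist y' y := dist_triangle _ _ _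
    _ ≤ R + 1/(k+1) := add_le_add hz hy'd

open Metric Set Filter Topology in
/-- Through every boundary point of the `R`-ball floating body `K_δ^R` there is
at least one closed ball of radius `R` cutting off from `K` a set of volume exactly `δ`. -/
theorem exists_ball_cutting_exact_volume (n : ℕ) (R : ℝ) (hR : 0 < R)
    (K : Set (EuclideanSpace ℝ (Fin n))) (hK : IsBallConvexBody n R K)
    (δ : ℝ) (hδ : 0 < δ) (x : EuclideanSpace ℝ (Fin n))
    (hx : x ∈ frontier (ballFloatingBody n R δ K)) :
    ∃ y : EuclideanSpace ℝ (Fin n), ‖x - y‖ = R ∧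
      volume (K \ Metric.closedBall y R) = ENNReal.ofReal δ := by
  classical
  set F := ballFloatingBody n R δ K with hF
  have hFclosed : IsClosed F := by
    refine isClosed_biInter fun y _ => isClosed_closedBall
  have hxF : x ∈ F := by
    have hxcl : x ∈ closure F := frontier_subset_closure hx
    rwa [hFclosed.closure_eq] at hxcl
  -- membership in F means being in every admissible ball
  have hmemF : ∀ z ∈ F, ∀ y', volume (K \ closedBall y' R) ≤ ENNReal.ofReal δ →
      dist z y' ≤ R := by
    intro z hz y' hy'
    have := mem_iInter₂.1 hz y' hy'
    simpa [mem_closedBall] using this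
  have hxnint : x ∉ interior F := fun h => hx.2 h
  -- construct approximating centers
  have hexists : ∀ k : ℕ, ∃ y', volume (K \ closedBall y' R) ≤ ENNReal.ofReal δ ∧
      R - 1/(k+1) < dist x y' ∧ dist x y' ≤ R := by
    intro k
    have hnotnhds : F ∉ 𝓝 x := fun h => hxnint (mem_interior_iff_mem_nhds.2 h)
    have : ¬ ball x (1/(k+1)) ⊆ F := by
      intro hsub
      exact hnotnhds (Filter.mem_of_superset (ball_mem_nhds x (by positivity)) hsub)
    obtain ⟨x', hx'ball, hx'F⟩ := not_subset.1 this
    -- x' ∉ F gives an admissible ball missing x'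
    have : ∃ y', volume (K \ closedBall y' R) ≤ ENNReal.ofReal δ ∧ R < dist x' y' := by
      by_contra hc
      push_neg at hc
      exact hx'F (mem_iInter₂.2 fun y' hy' => mem_closedBall.2 (hc y' hy'))
    obtain ⟨y', hy'v, hy'd⟩ := this
    refine ⟨y', hy'v, ?_, hmemF x hxF y' hy'v⟩
    have h1 : dist x x' < 1/(k+1) := by
      rw [dist_comm]; exact mem_ball.1 hx'ball
    have h2 : dist x' y' ≤ dist x' x + dist x y' := dist_triangle _ _ _
    rw [dist_comm x' x] at h2
    linarith
  choose u hu1 hu2 hu3 using hexists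
  -- extract a convergent subsequence
  have humem : ∀ k, u k ∈ closedBall x R := fun k => by
    rw [mem_closedBall, dist_comm]; exact hu3 k
  obtain ⟨y, -, φ, hφmono, hφtend⟩ :=
    (isCompact_closedBall x R).tendsto_subseq humem
  refine ⟨y, ?_, ?_⟩
  · -- distance is exactly R
    have hdtend : Tendsto (fun k => dist x (u (φ k))) atTop (𝓝 (dist x y)) :=
      tendsto_const_nhds.dist hφtend
    have hlow : Tendsto (fun k => R - 1/((φ k : ℝ)+1)) atTop (𝓝 R) := by
      have h0 : Tendsto (fun k : ℕ => 1/((k : ℝ)+1)) atTop (𝓝 0) :=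
        tendsto_one_div_add_atTop_nhds_zero_nat
      have := ((tendsto_const_nhds (α := ℕ) (x := R) (f := atTop)).sub (h0.comp hφmono.tendsto_atTop))
      simpa using this
    have hRlim : Tendsto (fun k => dist x (u (φ k))) atTop (𝓝 R) := by
      refine tendsto_of_tendsto_of_tendsto_of_le_of_le hlow tendsto_const_nhds
        (fun k => (hu2 (φ k)).le) (fun k => hu3 (φ k))
    have : dist x y = R := tendsto_nhds_unique hdtend hRlim
    rwa [dist_eq_norm] at this
  · have hdxy : dist x y = R := by
      have hdtend : Tendsto (fun k => dist x (u (φ k))) atTop (𝓝 (dist x y)) :=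
        tendsto_const_nhds.dist hφtend
      have hlow : Tendsto (fun k => R - 1/((φ k : ℝ)+1)) atTop (𝓝 R) := by
        have h0 : Tendsto (fun k : ℕ => 1/((k : ℝ)+1)) atTop (𝓝 0) :=
          tendsto_one_div_add_atTop_nhds_zero_nat
        have := ((tendsto_const_nhds (α := ℕ) (x := R) (f := atTop)).sub (h0.comp hφmono.tendsto_atTop))
        simpa using this
      have hRlim : Tendsto (fun k => dist x (u (φ k))) atTop (𝓝 R) :=
        tendsto_of_tendsto_of_tendsto_of_le_of_le hlow tendsto_const_nhds
          (fun k => (hu2 (φ k)).le) (fun k => hu3 (φ k))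
      exact tendsto_nhds_unique hdtend hRlim
    -- upper bound
    have hle : volume (K \ closedBall y R) ≤ ENNReal.ofReal δ := by
      refine aux_approx n R K _ y fun ε hε => ?_
      obtain ⟨N, hN⟩ := Metric.tendsto_atTop.1 hφtend ε hε
      exact ⟨u (φ N), (hN N le_rfl).le, hu1 (φ N)⟩
    -- lower bound, by contradiction
    rcases eq_or_lt_of_le hle with heq | hlt
    · exact heq
    exfalso
    obtain ⟨s, hs0, hsv⟩ := aux_shrink n R hR K hK.1 δ y hlt
    set y' := y + (s/R) • (y - x) with hy'
    have hyx : ‖y - x‖ = R := by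
      rw [← dist_eq_norm, dist_comm, hdxy]
    have hdyy' : dist y y' = s := by
      rw [dist_eq_norm]
      have : y - y' = -((s/R) • (y - x)) := by rw [hy']; abel
      rw [this, norm_neg, norm_smul, hyx]
      rw [Real.norm_eq_abs, abs_of_pos (by positivity)]
      field_simp
    have hsub : closedBall y (R - s) ⊆ closedBall y' R := by
      intro z hz
      rw [mem_closedBall] at *
      calc dist z y' ≤ dist z y + dist y y' := dist_triangle _ _ _
        _ ≤ (R - s) + s := add_le_add hz hdyy'.le
        _ = R := by ring
    have hv' : volume (K \ closedBall y' R) ≤ ENNReal.ofReal δ :=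
      le_trans (measure_mono (diff_subset_diff_right hsub)) hsv
    have hxin : dist x y' ≤ R := hmemF x hxF y' hv'
    have hxy' : x - y' = (1 + s/R) • (x - y) := by
      rw [hy']
      module
    have : dist x y' = R + s := by
      rw [dist_eq_norm, hxy', norm_smul, Real.norm_eq_abs,
        abs_of_pos (by positivity), ← dist_eq_norm, hdxy]
      field_simp
    linarith
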